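/- For every metric space X, the Nagata dimension of X equals the Nagata dimension of the metric completion of X. -/

import Mathlib

open Metric Set

/-- `X` has Nagata dimension at most `n` (witnessed by some constant `c > 0`):
for every `s > 0` there is a covering by sets of diameter `≤ c * s` such that every
set of diameter `≤ s` meets at most `n + 1` members of the covering. -/
def NagataProp (X : Type*) [MetricSpace X] (n : ℕ) : Prop :=
  ∃ c : ℝ, 0 < c ∧ ∀ s : ℝ, 0 < s → ∃ 𝓑 : Set (Set X),
    (⋃₀ 𝓑 = univ) ∧
    (∀ B ∈ 𝓑, EMetric.diam B ≤ ENNReal.ofReal (c * s)) ∧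
    (∀ E : Set X, EMetric.diam E ≤ ENNReal.ofReal s →
      ∃ T : Finset (Set X), T.card ≤ n + 1 ∧
        ∀ B ∈ 𝓑, (B ∩ E).Nonempty → B ∈ T)

/-- The Nagata (Assouad–Nagata) dimension of a metric space, as an element of `ℕ∞`. -/
noncomputable def nagataDim (X : Type*) [MetricSpace X] : ℕ∞ :=
  sInf {k : ℕ∞ | ∃ n : ℕ, k = n ∧ NagataProp X n}

section Aux

open UniformSpace ENNReal

variable {X : Type*} [MetricSpace X]

private lemma diam_preimage_le (S : Set (Completion X)) :
    EMetric.diam (((↑) : X → Completion X) ⁻¹' S) ≤ EMetric.diam S := by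
  unfold EMetric.diam
  rw [← Completion.coe_isometry.ediam_image]
  exact EMetric.diam_mono (image_preimage_subset _ _)

private lemma nagata_of_completion {n : ℕ} (h : NagataProp (Completion X) n) :
    NagataProp X n := by
  classical
  obtain ⟨c, hc, H⟩ := h
  refine ⟨c, hc, fun s hs => ?_⟩
  obtain ⟨𝓑, hcov, hdiam, hmul⟩ := H s hs
  refine ⟨(fun B => ((↑) : X → Completion X) ⁻¹' B) '' 𝓑, ?_, ?_, ?_⟩
  · ext x
    simp only [mem_sUnion, mem_univ, iff_true]
    have : (↑x : Completion X) ∈ ⋃₀ 𝓑 := hcov ▸ mem_univ _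
    obtain ⟨B, hB, hxB⟩ := this
    exact ⟨_, mem_image_of_mem _ hB, hxB⟩
  · rintro B ⟨C, hC, rfl⟩
    exact (diam_preimage_le C).trans (hdiam C hC)
  · intro E hE
    have hE' : EMetric.diam (((↑) : X → Completion X) '' E) ≤ ENNReal.ofReal s := by
      unfold EMetric.diam; rwa [Completion.coe_isometry.ediam_image]
    obtain ⟨T, hT, hTmem⟩ := hmul _ hE'
    refine ⟨T.image (fun B => ((↑) : X → Completion X) ⁻¹' B),
      le_trans (Finset.card_image_le) hT, ?_⟩
    rintro B ⟨C, hC, rfl⟩ ⟨x, hx1, hx2⟩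
    have : C ∈ T := hTmem C hC ⟨↑x, hx1, mem_image_of_mem _ hx2⟩
    exact Finset.mem_image_of_mem _ this

private lemma nagata_to_completion {n : ℕ} (h : NagataProp X n) :
    NagataProp (Completion X) n := by
  classical
  obtain ⟨c, hc, H⟩ := h
  refine ⟨2 * c + 1, by positivity, fun s hs => ?_⟩
  set ε : ℝ := s / 2 with hε
  have hε0 : 0 < ε := by positivity
  obtain ⟨𝓑, hcov, hdiam, hmul⟩ := H (2 * s) (by positivity)
  have hofε : (2 : ℝ≥0∞) * ENNReal.ofReal ε = ENNReal.ofReal s := by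
    rw [← ENNReal.ofReal_ofNat, ← ENNReal.ofReal_mul (by norm_num)]
    congr 1; rw [hε]; ring
  have hthick : ∀ (S : Set (Completion X)),
      EMetric.diam (thickening ε S) ≤ EMetric.diam S + ENNReal.ofReal s := by
    intro S
    have := Metric.ediam_thickening_le (s := S) ε.toNNReal
    rw [Real.coe_toNNReal ε hε0.le] at this
    calc EMetric.diam (thickening ε S) ≤ EMetric.diam S + 2 * ↑ε.toNNReal := this
      _ = EMetric.diam S + ENNReal.ofReal s := by
          rw [← hofε]; congr 1
  refine ⟨(fun B => thickening ε (((↑) : X → Completion X) '' B)) '' 𝓑, ?_, ?_, ?_⟩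
  · ext y
    simp only [mem_sUnion, mem_univ, iff_true]
    obtain ⟨x, hx⟩ := Completion.denseRange_coe.exists_dist_lt y hε0
    have : x ∈ ⋃₀ 𝓑 := hcov ▸ mem_univ _
    obtain ⟨B, hB, hxB⟩ := this
    refine ⟨_, mem_image_of_mem _ hB, ?_⟩
    rw [mem_thickening_iff]
    exact ⟨↑x, mem_image_of_mem _ hxB, hx⟩
  · rintro B ⟨C, hC, rfl⟩
    calc EMetric.diam (thickening ε (((↑) : X → Completion X) '' C))
        ≤ EMetric.diam (((↑) : X → Completion X) '' C) + ENNReal.ofReal s := hthick _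
      _ = EMetric.diam C + ENNReal.ofReal s := by unfold EMetric.diam; rw [Completion.coe_isometry.ediam_image]
      _ ≤ ENNReal.ofReal (c * (2 * s)) + ENNReal.ofReal s := by
          exact add_le_add_left (hdiam C hC) _
      _ = ENNReal.ofReal ((2 * c + 1) * s) := by
          rw [← ENNReal.ofReal_add (by positivity) hs.le]
          congr 1; ring
  · intro E hE
    set E' : Set X := ((↑) : X → Completion X) ⁻¹' (thickening ε E) with hE'def
    have hE'diam : EMetric.diam E' ≤ ENNReal.ofReal (2 * s) := by
      calc EMetric.diam E' ≤ EMetric.diam (thickening ε E) := diam_preimage_le _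
        _ ≤ EMetric.diam E + ENNReal.ofReal s := hthick _
        _ ≤ ENNReal.ofReal s + ENNReal.ofReal s := add_le_add_left hE _
        _ = ENNReal.ofReal (2 * s) := by
            rw [← ENNReal.ofReal_add hs.le hs.le]; congr 1; ring
    obtain ⟨T, hT, hTmem⟩ := hmul E' hE'diam
    refine ⟨T.image (fun B => thickening ε (((↑) : X → Completion X) '' B)),
      le_trans (Finset.card_image_le) hT, ?_⟩
    rintro B ⟨C, hC, rfl⟩ ⟨y, hy1, hy2⟩
    rw [mem_thickening_iff] at hy1
    obtain ⟨z, ⟨b, hb, rfl⟩, hz⟩ := hy1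
    have hbE' : b ∈ E' := by
      rw [hE'def, mem_preimage, mem_thickening_iff]
      exact ⟨y, hy2, by rwa [dist_comm] at hz⟩
    exact Finset.mem_image_of_mem _ (hTmem C hC ⟨b, hb, hbE'⟩)

end Aux

theorem nagataDim_completion (X : Type*) [MetricSpace X] :
    nagataDim X = nagataDim (UniformSpace.Completion X) := by
  unfold nagataDim
  congr 1
  ext k
  constructor
  · rintro ⟨n, rfl, h⟩; exact ⟨n, rfl, nagata_to_completion h⟩
  · rintro ⟨n, rfl, h⟩; exact ⟨n, rfl, nagata_of_completion h⟩
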